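/- There exist constants C, d > 0 such that for all integers n ≥ 2, all even integers m ≥ 2, and every j ∈ [m], there is a deterministic decision tree T_j over Σ^M with max_x C(T_j, x) ≤ C·(n+m)·(log₂(n+m))^d which, on every input x ∈ Σ^M, outputs 1 if and only if g_{n,m}(x) = 1 and column j is good in x (i.e., j belongs to the set G of condition (4′)). -/

import Mathlib

open Classical
open scoped ENNReal

set_option maxHeartbeats 1000000

/-! ### Deterministic decision trees -/

inductive DTree (ι σ : Type) : Type
  | leaf (b : Bool) : DTree ι σ
  | node (v : ι) (child : σ → DTree ι σ) : DTree ι σ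

namespace DTree

variable {ι σ : Type}

/-- The output of the decision tree on input `x`. -/
def eval (x : ι → σ) : DTree ι σ → Bool
  | leaf b => b
  | node v child => (child (x v)).eval x

/-- The list of variables queried by the decision tree on input `x`,
in the order they are queried. -/
def queryList (x : ι → σ) : DTree ι σ → List ι
  | leaf _ => []
  | node v child => v :: (child (x v)).queryList x

/-- The cost of the decision tree on input `x`: the number of internal nodes visited. -/
def cost (T : DTree ι σ) (x : ι → σ) : ℕ := (T.queryList x).length

/-- `T` computes `f` if it outputs `f x` on every input `x`. -/
def Computes (T : DTree ι σ) (f : (ι → σ) → Bool) : Prop := ∀ x, T.eval x = f x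

end DTree

/-- Deterministic query complexity. -/
noncomputable def detComplexity {ι σ : Type} (f : (ι → σ) → Bool) : ℕ :=
  sInf {d : ℕ | ∃ T : DTree ι σ, T.Computes f ∧ ∀ x, T.cost x ≤ d}

/-- Expected cost of a randomized decision tree (a distribution over deterministic
decision trees) on input `x`. -/
noncomputable def expCost {ι σ : Type} (μ : PMF (DTree ι σ)) (x : ι → σ) : ℝ≥0∞ :=
  ∑' T : DTree ι σ, μ T * (T.cost x : ℝ≥0∞)

/-- Zero-error (Las Vegas) randomized query complexity. -/
noncomputable def R0query {ι σ : Type} (f : (ι → σ) → Bool) : ℝ≥0∞ :=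
  ⨅ μ ∈ {μ : PMF (DTree ι σ) | ∀ T ∈ μ.support, T.Computes f},
    ⨆ x : ι → σ, expCost μ x

/-- One-sided error randomized query complexity. -/
noncomputable def R1query {ι σ : Type} (f : (ι → σ) → Bool) : ℝ≥0∞ :=
  ⨅ μ ∈ {μ : PMF (DTree ι σ) |
      (∀ x, f x = false → ∀ T ∈ μ.support, T.eval x = false) ∧
      (∀ x, f x = true → 1 / 2 ≤ ∑' T : DTree ι σ, if T.eval x = true then μ T else 0)},
    ⨆ x : ι → σ, expCost μ x

/-- Bounded-error (Monte Carlo) randomized query complexity. -/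
noncomputable def Rquery {ι σ : Type} (f : (ι → σ) → Bool) : ℝ≥0∞ :=
  ⨅ μ ∈ {μ : PMF (DTree ι σ) |
      ∀ x, 9 / 10 ≤ ∑' T : DTree ι σ, if T.eval x = f x then μ T else 0},
    ⨆ x : ι → σ, expCost μ x
/-! ### Quantum query algorithms -/

/-- The standard quantum query oracle `O_x |j,p⟩|w⟩ = |j, p + x_j mod S⟩|w⟩`,
as a matrix. -/
noncomputable def qOracle {V ω : Type} [DecidableEq V] [DecidableEq ω] {S : ℕ}
    (x : V → Fin S) : Matrix (V × Fin S × ω) (V × Fin S × ω) ℂ :=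
  fun r c => if r = (c.1, c.2.1 + x c.1, c.2.2) then 1 else 0

/-- A quantum query algorithm on inputs `x : V → Fin S`, making `queries` queries, with
workspace `Fin (W+1)`, alternating the unitaries `U 0, …, U queries` with the oracle,
and measuring with the projector `P` at the end. -/
structure QAlg (V : Type) [Fintype V] [DecidableEq V] (S : ℕ) [NeZero S] where
  queries : ℕ
  W : ℕ
  init : V
  U : ℕ → Matrix (V × Fin S × Fin (W + 1)) (V × Fin S × Fin (W + 1)) ℂ
  hU : ∀ t, (U t).conjTranspose * U t = 1 ∧ U t * (U t).conjTranspose = 1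
  P : Matrix (V × Fin S × Fin (W + 1)) (V × Fin S × Fin (W + 1)) ℂ
  hP : P.conjTranspose = P ∧ P * P = P

namespace QAlg

variable {V : Type} [Fintype V] [DecidableEq V] {S : ℕ} [NeZero S]

/-- The state of the quantum algorithm after `t` steps on input `x`. -/
noncomputable def state (A : QAlg V S) (x : V → Fin S) :
    ℕ → (V × Fin S × Fin (A.W + 1) → ℂ)
  | 0 => (A.U 0).mulVec fun r => if r = (A.init, 0, 0) then 1 else 0
  | t + 1 => (A.U (t + 1)).mulVec ((qOracle x).mulVec (A.state x t))

/-- The probability that the algorithm accepts input `x`: `‖P |Ψ_x⟩‖²`. -/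
noncomputable def acceptProb (A : QAlg V S) (x : V → Fin S) : ℝ :=
  ∑ r : V × Fin S × Fin (A.W + 1), Complex.normSq (A.P.mulVec (A.state x A.queries) r)

end QAlg

/-- Bounded-error quantum query complexity (for functions over a finite input
alphabet `σ`, identified with `Fin (card σ)` via a fixed bijection). -/
noncomputable def Qquery {V σ : Type} [Fintype V] [DecidableEq V] [Fintype σ] [Nonempty σ]
    (f : (V → σ) → Bool) : ℕ :=
  letI : NeZero (Fintype.card σ) := ⟨Fintype.card_ne_zero⟩
  sInf {t : ℕ | ∃ A : QAlg V (Fintype.card σ), A.queries = t ∧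
    ∀ x : V → σ,
      (f x = true → 9 / 10 ≤ A.acceptProb fun j => Fintype.equivFin σ (x j)) ∧
      (f x = false → A.acceptProb (fun j => Fintype.equivFin σ (x j)) ≤ 1 / 10)}

/-- Exact quantum query complexity. -/
noncomputable def QEquery {V σ : Type} [Fintype V] [DecidableEq V] [Fintype σ] [Nonempty σ]
    (f : (V → σ) → Bool) : ℕ :=
  letI : NeZero (Fintype.card σ) := ⟨Fintype.card_ne_zero⟩
  sInf {t : ℕ | ∃ A : QAlg V (Fintype.card σ), A.queries = t ∧
    ∀ x : V → σ,
      (f x = true → A.acceptProb (fun j => Fintype.equivFin σ (x j)) = 1) ∧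
      (f x = false → A.acceptProb (fun j => Fintype.equivFin σ (x j)) = 0)}

/-- Approximate degree of a boolean function. -/
noncomputable def adeg {ι : Type} (F : (ι → Bool) → Bool) : ℕ :=
  sInf {d : ℕ | ∃ p : MvPolynomial ι ℝ, p.totalDegree ≤ d ∧
    ∀ y : ι → Bool, |MvPolynomial.eval (fun i => if y i then (1 : ℝ) else 0) p -
      (if F y then 1 else 0)| ≤ 1 / 10}
/-! ### The pointer functions of Göös–Pitassi–Watson type -/

/-- A symbol of the input alphabet: a boolean value, a left pointer, a right pointer,
and a back/internal pointer (to a cell or a column, depending on `β`). -/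
structure PSym (n m : ℕ) (β : Type) where
  val : Bool
  lp : Option (Fin n × Fin m)
  rp : Option (Fin n × Fin m)
  bp : Option β
deriving DecidableEq

/-- The all-ones symbol `(1,⊥,⊥,⊥)`. -/
def PSym.one (n m : ℕ) (β : Type) : PSym n m β := ⟨true, none, none, none⟩

/-- The symbol `(0,⊥,⊥,⊥)`. -/
def PSym.zero (n m : ℕ) (β : Type) : PSym n m β := ⟨false, none, none, none⟩

def PSym.equivProd (n m : ℕ) (β : Type) :
    PSym n m β ≃ Bool × Option (Fin n × Fin m) × Option (Fin n × Fin m) × Option β where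
  toFun v := (v.val, v.lp, v.rp, v.bp)
  invFun p := ⟨p.1, p.2.1, p.2.2.1, p.2.2.2⟩
  left_inv _ := rfl
  right_inv _ := rfl

instance {n m : ℕ} {β : Type} [Fintype β] : Fintype (PSym n m β) :=
  Fintype.ofEquiv _ (PSym.equivProd n m β).symm

instance {n m : ℕ} {β : Type} : Nonempty (PSym n m β) := ⟨PSym.one n m β⟩

/-- The sequence of k bits of `j`, most significant first:  the root-to-leaf path
(`false` = left, `true` = right) of the `j`-th leaf in the complete binary tree of depth `k`. -/
def bitsPath (k j : ℕ) : List Bool :=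
  ((List.range k).reverse).map fun i => j.testBit i

/-- The root-to-leaf path of the leaf labeled `j` (0-indexed) in the balanced binary tree
with `m` leaves: the complete binary tree if `m` is a power of 2, and otherwise the complete
binary tree on `2 ^ ⌊log₂ m⌋` leaves with a pair of children added to each of the
`m - 2 ^ ⌊log₂ m⌋` leftmost leaves. -/
def treePath (m j : ℕ) : List Bool :=
  if m - 2 ^ Nat.log 2 m = 0 then bitsPath (Nat.log 2 m) j
  else if j < 2 * (m - 2 ^ Nat.log 2 m) then
    bitsPath (Nat.log 2 m) (j / 2) ++ [j % 2 == 1]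
  else bitsPath (Nat.log 2 m) (j - (m - 2 ^ Nat.log 2 m))

/-- Starting at cell `a` and following the left/right pointers of `x` as prescribed by the
list `p` of moves (`false` = left pointer, `true` = right pointer); returns `none` if a
null pointer is encountered. -/
def followPath {n m : ℕ} {β : Type} (x : Fin n × Fin m → PSym n m β)
    (a : Fin n × Fin m) (p : List Bool) : Option (Fin n × Fin m) :=
  p.foldl (fun acc b => acc.bind fun c => if b then (x c).rp else (x c).lp) (some a)

/-- The conditions for `x` to be a 1-input of `f_{n,m}`, with marked column `b` and special
element `a`: (1) `b` is the unique all-1 column; (2) `a` is the unique cell of column `b`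
with `x_a ≠ (1,⊥,⊥,⊥)`; (3) for every column `j ≠ b` the tree path from `a` to the leaf
labeled `j` exists, and ends at a cell `ℓ_j` of column `j` holding a 0; (4) the back pointer
of each `ℓ_j` points to the column `b`. -/
def fCond (n m : ℕ) (x : Fin n × Fin m → PSym n m (Fin m))
    (b : Fin m) (a : Fin n × Fin m) : Prop :=
  (∀ j : Fin m, (∀ i : Fin n, (x (i, j)).val = true) ↔ j = b) ∧
  a.2 = b ∧
  (∀ i : Fin n, x (i, b) ≠ PSym.one n m (Fin m) ↔ (i, b) = a) ∧
  ∀ j : Fin m, j ≠ b →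
    ∃ ℓ : Fin n × Fin m, followPath x a (treePath m j.1) = some ℓ ∧
      ℓ.2 = j ∧ (x ℓ).val = false ∧ (x ℓ).bp = some b

/-- The pointer function `f_{n,m}`, with back pointers to the marked column. -/
noncomputable def fFun (n m : ℕ) (x : Fin n × Fin m → PSym n m (Fin m)) : Bool :=
  if ∃ b a, fCond n m x b a then true else false

/-- The conditions for `x` to be a 1-input of `g_{n,m}`, with marked column `b` and special
element `a`: (1)–(3) as for `f_{n,m}`, and (4′) the set of columns `j ≠ b` whose highlighted
zero `ℓ_j` has back pointer to `a` has size exactly `m/2`. -/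
def gCond (n m : ℕ) (x : Fin n × Fin m → PSym n m (Fin n × Fin m))
    (b : Fin m) (a : Fin n × Fin m) : Prop :=
  (∀ j : Fin m, (∀ i : Fin n, (x (i, j)).val = true) ↔ j = b) ∧
  a.2 = b ∧
  (∀ i : Fin n, x (i, b) ≠ PSym.one n m (Fin n × Fin m) ↔ (i, b) = a) ∧
  (∀ j : Fin m, j ≠ b →
    ∃ ℓ : Fin n × Fin m, followPath x a (treePath m j.1) = some ℓ ∧
      ℓ.2 = j ∧ (x ℓ).val = false) ∧
  {j : Fin m | j ≠ b ∧ ∃ ℓ : Fin n × Fin m,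
      followPath x a (treePath m j.1) = some ℓ ∧ (x ℓ).bp = some a}.ncard = m / 2

/-- The pointer function `g_{n,m}`, where exactly `m/2` of the highlighted zeroes point
back to the special element. -/
noncomputable def gFun (n m : ℕ) (x : Fin n × Fin m → PSym n m (Fin n × Fin m)) : Bool :=
  if ∃ b a, gCond n m x b a then true else false

/-- Column `j` is good in `x` (for `g_{n,m}`): `x` is a 1-input with marked column `b ≠ j`
and special element `a`, and the highlighted zero of column `j` points back to `a`. -/
def goodColumn (n m : ℕ) (x : Fin n × Fin m → PSym n m (Fin n × Fin m)) (j : Fin m) : Prop :=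
  ∃ b a, gCond n m x b a ∧ j ≠ b ∧
    ∃ ℓ : Fin n × Fin m, followPath x a (treePath m j.1) = some ℓ ∧ (x ℓ).bp = some a

/-- The conditions for `x` to be a 1-input of `h_{k,n,m}`, with marked columns `b 0,…,b (k-1)`
and special elements `a 0,…,a (k-1)`: (1) the `b s` are exactly the all-1 columns; (2) `a s` is
the unique cell of column `b s` with `x_{a s} ≠ (1,⊥,⊥,⊥)`; (3) the internal pointers of the
`a s` form a cycle and all the `a s` have equal left pointers and equal right pointers;
(4) for every non-marked column `j` the tree path from any `a s` to the leaf labeled `j`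
exists and ends at a cell `ℓ_j` of column `j` holding a 0. -/
def hCond (k n m : ℕ) (x : Fin n × Fin m → PSym n m (Fin n × Fin m))
    (b : Fin k → Fin m) (a : Fin k → Fin n × Fin m) : Prop :=
  Function.Injective b ∧
  (∀ j : Fin m, (∀ i : Fin n, (x (i, j)).val = true) ↔ ∃ s, b s = j) ∧
  (∀ s, (a s).2 = b s) ∧
  (∀ s, ∀ i : Fin n, x (i, b s) ≠ PSym.one n m (Fin n × Fin m) ↔ (i, b s) = a s) ∧
  (∀ s : Fin k, (x (a s)).bp = some (a ⟨(s.1 + 1) % k, Nat.mod_lt _ s.pos⟩)) ∧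
  (∀ s t : Fin k, (x (a s)).lp = (x (a t)).lp ∧ (x (a s)).rp = (x (a t)).rp) ∧
  ∀ j : Fin m, (∀ s, b s ≠ j) → ∀ s : Fin k,
    ∃ ℓ : Fin n × Fin m, followPath x (a s) (treePath m j.1) = some ℓ ∧
      ℓ.2 = j ∧ (x ℓ).val = false

/-- The pointer function `h_{k,n,m}` with `k` marked columns and no back pointers. -/
noncomputable def hFun (k n m : ℕ) (x : Fin n × Fin m → PSym n m (Fin n × Fin m)) : Bool :=
  if ∃ b a, hCond k n m x b a then true else false

/-- The hard input `x^ℓ`: cell `(i,j)` holds `(0,⊥,⊥,⊥)` if `i = ℓ j` and `(1,⊥,⊥,⊥)`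
otherwise. -/
def xhard (n m : ℕ) (β : Type) (ℓ : Fin m → Fin n) : Fin n × Fin m → PSym n m β :=
  fun c => if c.1 = ℓ c.2 then PSym.zero n m β else PSym.one n m β

/-- The set of (distinct) cells queried among the first `t` queries of `T` on input `x`. -/
def queriedUpTo {ι σ : Type} [DecidableEq ι] (T : DTree ι σ) (x : ι → σ) (t : ℕ) :
    Finset ι :=
  ((T.queryList x).take t).toFinset
/-! ### The progress measure for the hard distribution `x^ℓ` -/

/-- Column `j` is compromised (for the input `x^ℓ`), given the set `Q` of queried cells:
the zero cell `(ℓ j, j)` has been queried, or more than `n/2` cells of column `j` have been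
queried. -/
def compromisedCol (n m : ℕ) (ℓ : Fin m → Fin n) (Q : Finset (Fin n × Fin m))
    (j : Fin m) : Prop :=
  (ℓ j, j) ∈ Q ∨ n < 2 * (Q.filter fun c => c.2 = j).card

/-- The progress measure `I_t = A_t + (2/n)·B_t` of the decision tree `T` on the input `x^ℓ`
after `t` queries, where `A_t` is the number of compromised columns and `B_t` is the number
of queried cells lying outside compromised columns. -/
noncomputable def Imeasure (n m : ℕ)
    (T : DTree (Fin n × Fin m) (PSym n m (Fin n × Fin m))) (ℓ : Fin m → Fin n) (t : ℕ) : ℝ :=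
  ({j : Fin m |
      compromisedCol n m ℓ (queriedUpTo T (xhard n m (Fin n × Fin m) ℓ) t) j}.ncard : ℝ) +
    (2 / n) * ({c : Fin n × Fin m | c ∈ queriedUpTo T (xhard n m (Fin n × Fin m) ℓ) t ∧
      ¬ compromisedCol n m ℓ (queriedUpTo T (xhard n m (Fin n × Fin m) ℓ) t) c.2}.ncard : ℝ)
/-! ### The balanced binary tree, via root-to-node paths -/

/-- The node set of the balanced binary tree with `m` leaves: each node is identified with
the left/right path from the root to it, so the nodes are exactly the prefixes of the
root-to-leaf paths. -/
def treeNodes (m : ℕ) : Finset (List Bool) :=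
  (Finset.range m).biUnion fun j => (treePath m j).inits.toFinset

/-- The leaves of the balanced binary tree with `m` leaves. -/
def leafNodes (m : ℕ) : Finset (List Bool) :=
  (Finset.range m).image fun j => treePath m j

/-- The internal nodes of the balanced binary tree with `m` leaves. -/
def internalNodes (m : ℕ) : Finset (List Bool) :=
  treeNodes m \ leafNodes m

/-- The subtree rooted at a node `u`: all nodes of which `u` is a prefix. -/
def subtreeOf (m : ℕ) (u : List Bool) : Finset (List Bool) :=
  (treeNodes m).filter fun w => u <+: w

/-! ### The hard distribution for `h_{1,n,m}` -/

/-- A parameter quadruple `(v, π, ℓᴸ, ℓᴺ)` for the hard distribution: a bit `v`, a map `π`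
from internal tree nodes to columns, and row maps `ℓᴸ, ℓᴺ` for leaves resp. internal nodes. -/
abbrev HardQ (n m : ℕ) : Type :=
  Bool × ({u : List Bool // u ∈ internalNodes m} → Fin m) × (Fin m → Fin n) × (Fin m → Fin n)

/-- The valid parameter quadruples: `π` injective and `ℓᴸ j ≠ ℓᴺ j` for all `j`. -/
noncomputable def hardSet (n m : ℕ) : Finset (HardQ n m) :=
  Finset.univ.filter fun q => Function.Injective q.2.1 ∧ ∀ j, q.2.2.1 j ≠ q.2.2.2 j

/-- The column of the root of the tree (`none` if the tree has no internal node). -/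
noncomputable def rootCol (n m : ℕ) (q : HardQ n m) : Option (Fin m) :=
  if h : ([] : List Bool) ∈ internalNodes m then some (q.2.1 ⟨[], h⟩) else none

/-- The cell where a child node `w` of an internal node is placed: internal nodes go to
cell `(ℓᴺ (π w), π w)`, the leaf labeled `j` goes to cell `(ℓᴸ j, j)`, and the removed leaf
(the one labeled by the root's column) yields a null pointer. -/
noncomputable def childCell (n m : ℕ) (q : HardQ n m) (w : List Bool) :
    Option (Fin n × Fin m) :=
  if h : w ∈ internalNodes m then some (q.2.2.2 (q.2.1 ⟨w, h⟩), q.2.1 ⟨w, h⟩)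
  else if h2 : ∃ j : Fin m, w = treePath m j.1 ∧ some j ≠ rootCol n m q then
    some (q.2.2.1 (Classical.choose h2), Classical.choose h2)
  else none

/-- The input of the hard distribution determined by the parameter quadruple `q`:
the internal node `u` of the tree is placed at cell `(ℓᴺ (π u), π u)` with left and right
pointers to the cells of its children, value `v` and a self-loop internal pointer if `u` is
the root, and value 0 otherwise; for `j ≠ π(root)`, the leaf labeled `j` is placed at cell
`(ℓᴸ j, j)` with value 0 and null pointers; all the remaining cells hold `(1,⊥,⊥,⊥)`. -/
noncomputable def hardInput (n m : ℕ) (q : HardQ n m) :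
    Fin n × Fin m → PSym n m (Fin n × Fin m) :=
  fun c =>
    if h : ∃ u : {u : List Bool // u ∈ internalNodes m}, q.2.1 u = c.2 ∧ q.2.2.2 c.2 = c.1 then
      { val := if (Classical.choose h).1 = [] then q.1 else false
        lp := childCell n m q ((Classical.choose h).1 ++ [false])
        rp := childCell n m q ((Classical.choose h).1 ++ [true])
        bp := if (Classical.choose h).1 = [] then some c else none }
    else if some c.2 ≠ rootCol n m q ∧ c.1 = q.2.2.1 c.2 then PSym.zero n m (Fin n × Fin m)
    else PSym.one n m (Fin n × Fin m)

/-- Column `j` directly satisfies (i) or (ii): one of the cells `(ℓᴸ j, j)`, `(ℓᴺ j, j)` has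
been queried, or more than half of the cells of column `j` have been queried. -/
def colBad (n m : ℕ) (q : HardQ n m) (Q : Finset (Fin n × Fin m)) (j : Fin m) : Prop :=
  (q.2.2.1 j, j) ∈ Q ∨ (q.2.2.2 j, j) ∈ Q ∨ n < 2 * (Q.filter fun c => c.2 = j).card

/-- Column `j` is compromised: it satisfies (i) or (ii), or some ancestor `u` of `π⁻¹(j)`
in the tree is such that column `π u` satisfies (i) or (ii). -/
def compromisedCol19 (n m : ℕ) (q : HardQ n m) (Q : Finset (Fin n × Fin m))
    (j : Fin m) : Prop :=
  colBad n m q Q j ∨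
  ∃ w u : {u : List Bool // u ∈ internalNodes m}, q.2.1 w = j ∧
    u.1 <+: w.1 ∧ u.1 ≠ w.1 ∧ colBad n m q Q (q.2.1 u)

/-- The progress measure `I_t = min{A_t + (4·C0·log₂ m / n)·B_t, m/2}` of the decision tree
`D` on the hard-distribution input given by `q` after `t` queries, where `A_t` is the number
of compromised columns and `B_t` the number of queried cells outside compromised columns. -/
noncomputable def Imeasure19 (n m : ℕ) (C0 : ℝ)
    (D : DTree (Fin n × Fin m) (PSym n m (Fin n × Fin m))) (q : HardQ n m) (t : ℕ) : ℝ :=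
  min
    (({j : Fin m | compromisedCol19 n m q (queriedUpTo D (hardInput n m q) t) j}.ncard : ℝ) +
      (4 * C0 * Real.logb 2 m / n) *
        ({c : Fin n × Fin m | c ∈ queriedUpTo D (hardInput n m q) t ∧
          ¬ compromisedCol19 n m q (queriedUpTo D (hardInput n m q) t) c.2}.ncard : ℝ))
    (m / 2)
/-! ### Auxiliary development for Statement 10 -/

namespace S10

/-- A query program: a decision tree returning a value of type `α`. -/
inductive Prog (ι σ α : Type) : Type
  | ret (a : α) : Prog ι σ α
  | ask (v : ι) (k : σ → Prog ι σ α) : Prog ι σ α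

namespace Prog

variable {ι σ α β : Type}

def run (x : ι → σ) : Prog ι σ α → α
  | .ret a => a
  | .ask v k => (k (x v)).run x

def qs (x : ι → σ) : Prog ι σ α → List ι
  | .ret _ => []
  | .ask v k => v :: (k (x v)).qs x

def bind : Prog ι σ α → (α → Prog ι σ β) → Prog ι σ β
  | .ret a, f => f a
  | .ask v k, f => .ask v fun s => (k s).bind f

@[simp] lemma run_ret (x : ι → σ) (a : α) : (Prog.ret (ι := ι) (σ := σ) a).run x = a := rfl

@[simp] lemma run_ask (x : ι → σ) (v : ι) (k : σ → Prog ι σ α) :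
    (Prog.ask v k).run x = (k (x v)).run x := rfl

@[simp] lemma qs_ret (x : ι → σ) (a : α) : (Prog.ret (ι := ι) (σ := σ) a).qs x = [] := rfl

@[simp] lemma qs_ask (x : ι → σ) (v : ι) (k : σ → Prog ι σ α) :
    (Prog.ask v k).qs x = v :: (k (x v)).qs x := rfl

@[simp] lemma run_bind (p : Prog ι σ α) (f : α → Prog ι σ β) (x : ι → σ) :
    (p.bind f).run x = (f (p.run x)).run x := by
  induction p with
  | ret a => rfl
  | ask v k ih => exact ih (x v)

@[simp] lemma qs_bind (p : Prog ι σ α) (f : α → Prog ι σ β) (x : ι → σ) :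
    (p.bind f).qs x = p.qs x ++ (f (p.run x)).qs x := by
  induction p with
  | ret a => rfl
  | ask v k ih => simp [bind, ih (x v)]

def toTree : Prog ι σ Bool → DTree ι σ
  | .ret b => .leaf b
  | .ask v k => .node v fun s => (k s).toTree

lemma eval_toTree (p : Prog ι σ Bool) (x : ι → σ) : p.toTree.eval x = p.run x := by
  induction p with
  | ret b => rfl
  | ask v k ih => exact ih (x v)

lemma queryList_toTree (p : Prog ι σ Bool) (x : ι → σ) :
    p.toTree.queryList x = p.qs x := by
  induction p with
  | ret b => rfl
  | ask v k ih => simpa [toTree, DTree.queryList, qs] using ih (x v)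

lemma cost_toTree (p : Prog ι σ Bool) (x : ι → σ) :
    p.toTree.cost x = (p.qs x).length := by
  rw [DTree.cost, queryList_toTree]

/-- Read a list of variables, returning the list of (variable, value) pairs. -/
def readL : List ι → Prog ι σ (List (ι × σ))
  | [] => .ret []
  | c :: l => .ask c fun s => (readL l).bind fun t => .ret ((c, s) :: t)

@[simp] lemma run_readL (x : ι → σ) (l : List ι) :
    (readL (σ := σ) l).run x = l.map fun c => (c, x c) := by
  induction l with
  | nil => rfl
  | cons c l ih => simp [readL, ih]

@[simp] lemma qs_readL (x : ι → σ) (l : List ι) : (readL (σ := σ) l).qs x = l := by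
  induction l with
  | nil => rfl
  | cons c l ih => simp [readL, ih]

end Prog

end S10
namespace S10

open Prog

abbrev Cell (n m : ℕ) : Type := Fin n × Fin m
abbrev Sym (n m : ℕ) : Type := PSym n m (Cell n m)
abbrev Trace (n m : ℕ) : Type := List (Cell n m × Sym n m)
abbrev Pr (n m : ℕ) (α : Type) : Type := Prog (Cell n m) (Sym n m) α

variable {n m : ℕ}

/-- The list of cells of column `b`. -/
def colCells (n m : ℕ) (b : Fin m) : List (Cell n m) := (List.finRange n).map fun i => (i, b)

/-- Follow the pointer path `p` starting at `a`, recording all read cells. -/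
def followP : Cell n m → List Bool → Pr n m (Trace n m × Option (Cell n m))
  | a, [] => .ret ([], some a)
  | a, b :: p => .ask a fun s =>
      Option.elim (if b then s.rp else s.lp)
        (.ret ([(a, s)], none))
        (fun a' => (followP a' p).bind fun r => .ret ((a, s) :: r.1, r.2))

/-- Read the landing cell, if any. -/
def landR : Option (Cell n m) → Pr n m (Trace n m)
  | none => .ret []
  | some e => .ask e fun s => .ret [(e, s)]

/-- A duel between candidates `a` and `c`: follow the path from `c` towards the leaf
labeled by `a`'s column; a valid 0-landing there refutes `a`, otherwise `c` is refuted. -/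
def duel (a c : Cell n m) : Pr n m (Trace n m × Cell n m) :=
  (followP c (treePath m a.2.1)).bind fun r =>
    Option.elim r.2
      (.ret (r.1, a))
      (fun e => .ask e fun se =>
        .ret ((e, se) :: r.1, if e.2 = a.2 ∧ se.val = false then c else a))

/-- Tournament among candidates, current champion `a`. -/
def tourAux : List (Cell n m) → Cell n m → Pr n m (Trace n m × Cell n m)
  | [], a => .ret ([], a)
  | c :: l, a => (duel a c).bind fun r =>
      (tourAux l r.2).bind fun r' => .ret (r.1 ++ r'.1, r'.2)

def tourP : List (Cell n m) → Pr n m (Trace n m × Option (Cell n m))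
  | [] => .ret ([], none)
  | a :: l => (tourAux l a).bind fun r => .ret (r.1, some r.2)

/-- Follow the paths from `a` to all leaves in `l`, reading the landing cells. -/
def allPaths (a : Cell n m) : List (Fin m) → Pr n m (Trace n m)
  | [] => .ret []
  | β :: l => (followP a (treePath m β.1)).bind fun r =>
      (landR r.2).bind fun t2 =>
      (allPaths a l).bind fun t3 => .ret (r.1 ++ t2 ++ t3)

/-- Full exploration for the surviving candidate `a`: its column, and all tree paths. -/
def explore (a : Cell n m) : Pr n m (Trace n m) :=
  (readL (colCells n m a.2)).bind fun t3 =>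
  (allPaths a (List.finRange m)).bind fun t4 => .ret (t3 ++ t4)

def exploreO : Option (Cell n m) → Pr n m (Trace n m)
  | none => .ret []
  | some a => explore a

/-- Extract candidate special elements from the read data of column `j`. -/
def extract1 (j : Fin m) (t : Trace n m) : List (Cell n m) :=
  t.filterMap fun pr =>
    (pr.2.bp).bind fun a => if pr.2.val = false ∧ a.2 ≠ j then some a else none

/-- Keep the first candidate in each column. -/
def dedupCols : List (Cell n m) → List (Cell n m)
  | [] => []
  | a :: l => a :: dedupCols (l.filter fun c => decide (c.2 ≠ a.2))
termination_by l => l.length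
decreasing_by simpa using Nat.lt_succ_of_le ((List.length_filter_le _ _).trans_eq List.length_attach)

/-- Filter candidates: keep those whose symbol is not `(1,⊥,⊥,⊥)`, one per column. -/
def filt2 (t2 : Trace n m) : List (Cell n m) :=
  dedupCols ((t2.filter fun pr => decide (pr.2 ≠ PSym.one n m (Cell n m))).map Prod.fst)

/-- Accept iff the gathered trace forces `goodColumn · j`. -/
noncomputable def finalDec (n m : ℕ) (j : Fin m) (tr : Trace n m) : Bool :=
  if (∀ y : Cell n m → Sym n m, (∀ pr ∈ tr, y pr.1 = pr.2) → goodColumn n m y j)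
    then true else false

/-- The full algorithm. -/
noncomputable def algoP (n m : ℕ) (j : Fin m) : Pr n m Bool :=
  (readL (colCells n m j)).bind fun t1 =>
  (readL (extract1 j t1)).bind fun t2 =>
  (tourP (filt2 t2)).bind fun rt =>
  (exploreO rt.2).bind fun t5 =>
  .ret (finalDec n m j (t1 ++ (t2 ++ (rt.1 ++ t5))))

end S10
namespace S10

open Prog

variable {n m : ℕ}

/-! #### followPath basics -/

lemma followPath_foldl_none {β : Type} (x : Fin n × Fin m → PSym n m β) (p : List Bool) :
    p.foldl (fun acc b => acc.bind fun c => if b then (x c).rp else (x c).lp) none = none := by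
  induction p with
  | nil => rfl
  | cons b p ih => simpa using ih

lemma followPath_cons {β : Type} (x : Fin n × Fin m → PSym n m β) (a : Fin n × Fin m)
    (b : Bool) (p : List Bool) :
    followPath x a (b :: p) =
      Option.elim (if b then (x a).rp else (x a).lp) none (fun a' => followPath x a' p) := by
  unfold followPath
  rw [List.foldl_cons]
  cases hs : (if b then (x a).rp else (x a).lp) with
  | none =>
      simp only [Option.bind_some, hs, Option.elim_none]
      exact followPath_foldl_none x p
  | some a' => simp only [Option.bind_some, hs, Option.elim_some]

/-! #### followP specification -/

lemma followP_spec (x : Cell n m → Sym n m) (p : List Bool) : ∀ (a : Cell n m),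
    ((followP a p).run x).2 = followPath x a p ∧
    (∀ pr ∈ ((followP a p).run x).1, x pr.1 = pr.2) ∧
    ((followP a p).qs x).length ≤ p.length ∧
    (∀ y : Cell n m → Sym n m, (∀ pr ∈ ((followP a p).run x).1, y pr.1 = pr.2) →
      followPath y a p = followPath x a p) := by
  induction p with
  | nil =>
      intro a
      refine ⟨rfl, by simp [followP], by simp [followP], fun y _ => rfl⟩
  | cons b p ih =>
      intro a
      rw [followP]
      cases hs : (if b then (x a).rp else (x a).lp) with
      | none =>
          simp only [run_ask, qs_ask, hs, Option.elim_none, run_ret, qs_ret]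
          refine ⟨?_, ?_, by simp, ?_⟩
          · rw [followPath_cons, hs]; rfl
          · intro pr hpr
            simp only [List.mem_singleton] at hpr
            subst hpr; rfl
          · intro y hy
            have hya : y a = x a := hy (a, x a) (by simp)
            rw [followPath_cons, followPath_cons, hya, hs]; rfl
      | some a' =>
          obtain ⟨ih1, ih2, ih3, ih4⟩ := ih a'
          simp only [run_ask, qs_ask, hs, Option.elim_some, run_bind, qs_bind, run_ret, qs_ret]
          refine ⟨?_, ?_, ?_, ?_⟩
          · rw [followPath_cons, hs]; exact ih1
          · intro pr hpr
            simp only [List.mem_cons] at hpr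
            rcases hpr with h | h
            · subst h; rfl
            · exact ih2 pr h
          · simpa using Nat.succ_le_succ ih3
          · intro y hy
            have hya : y a = x a := hy (a, x a) (by simp)
            rw [followPath_cons, followPath_cons (x := x), hya, hs]
            simp only [Option.elim_some]
            exact ih4 y fun pr hpr => hy pr (by simp [hpr])

lemma followP_run_snd (x : Cell n m → Sym n m) (a : Cell n m) (p : List Bool) :
    ((followP a p).run x).2 = followPath x a p := (followP_spec x p a).1

lemma followP_honest (x : Cell n m → Sym n m) (a : Cell n m) (p : List Bool) :
    ∀ pr ∈ ((followP a p).run x).1, x pr.1 = pr.2 := (followP_spec x p a).2.1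

lemma followP_qs_le (x : Cell n m → Sym n m) (a : Cell n m) (p : List Bool) :
    ((followP a p).qs x).length ≤ p.length := (followP_spec x p a).2.2.1

lemma followP_agree (x y : Cell n m → Sym n m) (a : Cell n m) (p : List Bool)
    (h : ∀ pr ∈ ((followP a p).run x).1, y pr.1 = pr.2) :
    followPath y a p = followPath x a p := (followP_spec x p a).2.2.2 y h

/-! #### landR -/

@[simp] lemma landR_run_none (x : Cell n m → Sym n m) :
    (landR (n := n) (m := m) none).run x = [] := rfl

@[simp] lemma landR_run_some (x : Cell n m → Sym n m) (e : Cell n m) :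
    (landR (some e)).run x = [(e, x e)] := rfl

lemma landR_qs_le (x : Cell n m → Sym n m) (o : Option (Cell n m)) :
    ((landR o).qs x).length ≤ 1 := by cases o <;> simp [landR]

lemma landR_honest (x : Cell n m → Sym n m) (o : Option (Cell n m)) :
    ∀ pr ∈ ((landR o).run x), x pr.1 = pr.2 := by
  cases o with
  | none => simp
  | some e => intro pr hpr; simp only [landR_run_some, List.mem_singleton] at hpr; subst hpr; rfl

/-! #### treePath length -/

lemma bitsPath_length (k jj : ℕ) : (bitsPath k jj).length = k := by simp [bitsPath]

lemma treePath_length (m c : ℕ) : (treePath m c).length ≤ Nat.log 2 m + 1 := by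
  unfold treePath
  split_ifs <;> simp [bitsPath_length]

end S10
namespace S10

open Prog

variable {n m : ℕ}

/-! #### duel lemmas -/

lemma duel_run (x : Cell n m → Sym n m) (a c : Cell n m) :
    (duel a c).run x =
      Option.elim (followPath x c (treePath m a.2.1))
        (((followP c (treePath m a.2.1)).run x).1, a)
        (fun e => ((e, x e) :: ((followP c (treePath m a.2.1)).run x).1,
          if e.2 = a.2 ∧ (x e).val = false then c else a)) := by
  rw [duel, run_bind, ← followP_run_snd x c (treePath m a.2.1)]
  cases h : ((followP c (treePath m a.2.1)).run x).2 <;> simp [h]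

lemma duel_winner_mem (x : Cell n m → Sym n m) (a c : Cell n m) :
    ((duel a c).run x).2 = a ∨ ((duel a c).run x).2 = c := by
  rw [duel_run]
  cases h : followPath x c (treePath m a.2.1) with
  | none => left; rfl
  | some e =>
      simp only [Option.elim_some]
      split_ifs with h2
      · right; rfl
      · left; rfl

/-- If `a`'s column is all-true, `a` wins any duel in which it is the incumbent. -/
lemma duel_win_first (x : Cell n m → Sym n m) (a c : Cell n m)
    (hcol : ∀ i : Fin n, (x (i, a.2)).val = true) :
    ((duel a c).run x).2 = a := by
  rw [duel_run]
  cases h : followPath x c (treePath m a.2.1) with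
  | none => rfl
  | some e =>
      simp only [Option.elim_some]
      rw [if_neg]
      rintro ⟨h1, h2⟩
      have := hcol e.1
      rw [← h1, Prod.mk.eta] at this
      rw [this] at h2
      simp at h2

/-- If the path from `a` to the leaf labeled by `c`'s column has a valid 0-landing,
`a` wins the duel in which it is the challenger. -/
lemma duel_win_second (x : Cell n m → Sym n m) (a c : Cell n m) (ℓ : Cell n m)
    (hf : followPath x a (treePath m c.2.1) = some ℓ) (h1 : ℓ.2 = c.2)
    (h2 : (x ℓ).val = false) :
    ((duel c a).run x).2 = a := by
  rw [duel_run, hf]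
  simp only [Option.elim_some]
  rw [if_pos ⟨h1, h2⟩]

lemma duel_honest (x : Cell n m → Sym n m) (a c : Cell n m) :
    ∀ pr ∈ ((duel a c).run x).1, x pr.1 = pr.2 := by
  rw [duel_run]
  cases h : followPath x c (treePath m a.2.1) with
  | none => exact followP_honest x c _
  | some e =>
      simp only [Option.elim_some]
      intro pr hpr
      rcases List.mem_cons.mp hpr with h | h
      · subst h; rfl
      · exact followP_honest x c _ pr h

lemma duel_qs_le (x : Cell n m → Sym n m) (a c : Cell n m) :
    ((duel a c).qs x).length ≤ Nat.log 2 m + 2 := by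
  rw [duel, qs_bind]
  have h1 := followP_qs_le x c (treePath m a.2.1)
  have h2 := treePath_length m a.2.1
  cases h : ((followP c (treePath m a.2.1)).run x).2 with
  | none => simp only [h, Option.elim_none, qs_ret, List.append_nil, List.length_append]
            omega
  | some e => simp only [h, Option.elim_some, qs_ask, qs_ret, List.length_append]
              simp only [List.length_cons, List.length_nil]
              omega

/-! #### tournament lemmas -/

lemma tourAux_honest (x : Cell n m → Sym n m) :
    ∀ (l : List (Cell n m)) (a : Cell n m), ∀ pr ∈ ((tourAux l a).run x).1, x pr.1 = pr.2 := by
  intro l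
  induction l with
  | nil => simp [tourAux]
  | cons c l ih =>
      intro a pr hpr
      simp only [tourAux, run_bind, run_ret] at hpr
      rcases List.mem_append.mp hpr with h | h
      · exact duel_honest x a c pr h
      · exact ih _ pr h

lemma tourAux_qs_le (x : Cell n m → Sym n m) :
    ∀ (l : List (Cell n m)) (a : Cell n m),
      ((tourAux l a).qs x).length ≤ l.length * (Nat.log 2 m + 2) := by
  intro l
  induction l with
  | nil => simp [tourAux]
  | cons c l ih =>
      intro a
      simp only [tourAux, qs_bind, qs_ret, List.append_nil, List.length_append]
      have h1 := duel_qs_le x a c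
      have h2 := ih ((duel a c).run x).2
      simp only [List.length_cons]
      calc ((duel a c).qs x).length + ((tourAux l ((duel a c).run x).2).qs x).length
          ≤ (Nat.log 2 m + 2) + l.length * (Nat.log 2 m + 2) := Nat.add_le_add h1 h2
        _ = (l.length + 1) * (Nat.log 2 m + 2) := by ring

/-- The key tournament lemma: if `a` wins every duel it takes part in, then it
wins the tournament. -/
lemma tourAux_correct (x : Cell n m → Sym n m) (a : Cell n m)
    (hw1 : ∀ c : Cell n m, ((duel a c).run x).2 = a)
    (hw2 : ∀ c : Cell n m, c.2 ≠ a.2 → ((duel c a).run x).2 = a) :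
    ∀ (l : List (Cell n m)) (a0 : Cell n m),
      (a0 :: l).Pairwise (fun u v => u.2 ≠ v.2) → (a0 = a ∨ a ∈ l) →
      ((tourAux l a0).run x).2 = a := by
  intro l
  induction l with
  | nil =>
      intro a0 _ hmem
      rcases hmem with h | h
      · subst h; rfl
      · exact absurd h List.not_mem_nil
  | cons c l ih =>
      intro a0 hpw hmem
      simp only [tourAux, run_bind, run_ret]
      rw [List.pairwise_cons] at hpw
      obtain ⟨ha0, hpw2⟩ := hpw
      rw [List.pairwise_cons] at hpw2
      obtain ⟨hc, hpwl⟩ := hpw2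
      have ha0c : a0.2 ≠ c.2 := ha0 c List.mem_cons_self
      rcases hmem with h | h
      · -- a0 = a
        subst h
        have hw : ((duel a0 c).run x).2 = a0 := hw1 c
        rw [hw]
        refine ih a0 ?_ (Or.inl rfl)
        rw [List.pairwise_cons]
        exact ⟨fun v hv => ha0 v (List.mem_cons_of_mem c hv), hpwl⟩
      · rcases List.mem_cons.mp h with h | h
        · -- a = c
          subst h
          have hw : ((duel a0 a).run x).2 = a := hw2 a0 (fun hh => ha0c hh)
          rw [hw]
          refine ih a ?_ (Or.inl rfl)
          rw [List.pairwise_cons]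
          exact ⟨hc, hpwl⟩
        · -- a ∈ l
          rcases duel_winner_mem x a0 c with hw | hw <;> rw [hw]
          · refine ih a0 ?_ (Or.inr h)
            rw [List.pairwise_cons]
            exact ⟨fun v hv => ha0 v (List.mem_cons_of_mem c hv), hpwl⟩
          · refine ih c ?_ (Or.inr h)
            rw [List.pairwise_cons]
            exact ⟨hc, hpwl⟩

lemma tourP_honest (x : Cell n m → Sym n m) (l : List (Cell n m)) :
    ∀ pr ∈ ((tourP l).run x).1, x pr.1 = pr.2 := by
  cases l with
  | nil => simp [tourP]
  | cons a l =>
      simp only [tourP, run_bind, run_ret]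
      exact tourAux_honest x l a

lemma tourP_qs_le (x : Cell n m → Sym n m) (l : List (Cell n m)) :
    ((tourP l).qs x).length ≤ l.length * (Nat.log 2 m + 2) := by
  cases l with
  | nil => simp [tourP]
  | cons a l =>
      simp only [tourP, qs_bind, qs_ret, List.append_nil]
      calc ((tourAux l a).qs x).length ≤ l.length * (Nat.log 2 m + 2) := tourAux_qs_le x l a
        _ ≤ (a :: l).length * (Nat.log 2 m + 2) := by
            simp only [List.length_cons]; exact Nat.mul_le_mul_right _ (Nat.le_succ _)

/-! #### allPaths lemmas -/

lemma allPaths_honest (x : Cell n m → Sym n m) (a : Cell n m) :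
    ∀ (l : List (Fin m)), ∀ pr ∈ ((allPaths a l).run x), x pr.1 = pr.2 := by
  intro l
  induction l with
  | nil => simp [allPaths]
  | cons β l ih =>
      intro pr hpr
      simp only [allPaths, run_bind, run_ret, List.append_assoc, List.mem_append] at hpr
      rcases hpr with h | h | h
      · exact followP_honest x a _ pr h
      · exact landR_honest x _ pr h
      · exact ih pr h

lemma allPaths_qs_le (x : Cell n m → Sym n m) (a : Cell n m) :
    ∀ (l : List (Fin m)), ((allPaths a l).qs x).length ≤ l.length * (Nat.log 2 m + 2) := by
  intro l
  induction l with
  | nil => simp [allPaths]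
  | cons β l ih =>
      simp only [allPaths, qs_bind, qs_ret, List.append_nil, List.length_append,
        List.length_cons]
      have h1 := followP_qs_le x a (treePath m β.1)
      have h2 := treePath_length m β.1
      have h3 := landR_qs_le x (((followP a (treePath m β.1)).run x).2)
      calc ((followP a (treePath m β.1)).qs x).length +
            (((landR ((followP a (treePath m β.1)).run x).2).qs x).length +
              ((allPaths a l).qs x).length)
          ≤ (Nat.log 2 m + 1) + (1 + l.length * (Nat.log 2 m + 2)) := by
            refine Nat.add_le_add (h1.trans h2) (Nat.add_le_add h3 ih)
        _ = (l.length + 1) * (Nat.log 2 m + 2) := by ring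

lemma allPaths_spec (x : Cell n m → Sym n m) (a : Cell n m) :
    ∀ (l : List (Fin m)) (β : Fin m), β ∈ l →
      (∀ pr ∈ ((followP a (treePath m β.1)).run x).1, pr ∈ (allPaths a l).run x) ∧
      (∀ e : Cell n m, followPath x a (treePath m β.1) = some e →
        (e, x e) ∈ (allPaths a l).run x) := by
  intro l
  induction l with
  | nil => intro β hβ; exact absurd hβ List.not_mem_nil
  | cons β0 l ih =>
      intro β hβ
      simp only [allPaths, run_bind, run_ret, List.append_assoc]
      rcases List.mem_cons.mp hβ with h | h
      · subst h
        constructor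
        · intro pr hpr
          exact List.mem_append.mpr (Or.inl hpr)
        · intro e he
          refine List.mem_append.mpr (Or.inr (List.mem_append.mpr (Or.inl ?_)))
          rw [← followP_run_snd x a (treePath m β.1)] at he
          rw [he, landR_run_some]
          exact List.mem_singleton.mpr rfl
      · obtain ⟨ih1, ih2⟩ := ih β h
        constructor
        · intro pr hpr
          exact List.mem_append.mpr (Or.inr (List.mem_append.mpr (Or.inr (ih1 pr hpr))))
        · intro e he
          exact List.mem_append.mpr (Or.inr (List.mem_append.mpr (Or.inr (ih2 e he))))

/-! #### explore lemmas -/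

lemma explore_honest (x : Cell n m → Sym n m) (a : Cell n m) :
    ∀ pr ∈ ((explore a).run x), x pr.1 = pr.2 := by
  intro pr hpr
  simp only [explore, run_bind, run_ret, run_readL, List.mem_append] at hpr
  rcases hpr with h | h
  · rcases List.mem_map.mp h with ⟨c, _, hc⟩
    subst hc; rfl
  · exact allPaths_honest x a _ pr h

lemma exploreO_honest (x : Cell n m → Sym n m) (o : Option (Cell n m)) :
    ∀ pr ∈ ((exploreO o).run x), x pr.1 = pr.2 := by
  cases o with
  | none => simp [exploreO]
  | some a => exact explore_honest x a

lemma explore_qs_le (x : Cell n m → Sym n m) (a : Cell n m) :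
    ((explore a).qs x).length ≤ n + m * (Nat.log 2 m + 2) := by
  simp only [explore, qs_bind, qs_ret, List.append_nil, List.length_append, qs_readL]
  have h1 : (colCells n m a.2).length = n := by simp [colCells]
  have h2 := allPaths_qs_le x a (List.finRange m)
  simp only [List.length_finRange] at h2
  omega

lemma exploreO_qs_le (x : Cell n m → Sym n m) (o : Option (Cell n m)) :
    ((exploreO o).qs x).length ≤ n + m * (Nat.log 2 m + 2) := by
  cases o with
  | none => simp [exploreO]
  | some a => exact explore_qs_le x a

/-! #### dedupCols lemmas -/

lemma dedupCols_subset : ∀ (l : List (Cell n m)), dedupCols l ⊆ l := by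
  intro l
  induction l using dedupCols.induct with
  | case1 => simp [dedupCols]
  | case2 a l ih =>
      rw [List.unattach_filter (g := fun c => decide (c.2 ≠ a.2)) (hf := fun _ _ => rfl),
        List.unattach_attach] at ih
      rw [dedupCols]
      intro v hv
      rcases List.mem_cons.mp hv with h | h
      · subst h; exact List.mem_cons_self
      · exact List.mem_cons_of_mem _ (List.mem_of_mem_filter (ih h))

lemma dedupCols_pairwise : ∀ (l : List (Cell n m)),
    (dedupCols l).Pairwise (fun u v => u.2 ≠ v.2) := by
  intro l
  induction l using dedupCols.induct with
  | case1 => simp [dedupCols]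
  | case2 a l ih =>
      rw [List.unattach_filter (g := fun c => decide (c.2 ≠ a.2)) (hf := fun _ _ => rfl),
        List.unattach_attach] at ih
      rw [dedupCols, List.pairwise_cons]
      refine ⟨fun v hv => ?_, ih⟩
      have := List.of_mem_filter (dedupCols_subset _ hv)
      simp only [decide_eq_true_eq] at this
      exact fun hh => this hh.symm

lemma dedupCols_length_le : ∀ (l : List (Cell n m)), (dedupCols l).length ≤ l.length := by
  intro l
  induction l using dedupCols.induct with
  | case1 => simp [dedupCols]
  | case2 a l ih =>
      rw [List.unattach_filter (g := fun c => decide (c.2 ≠ a.2)) (hf := fun _ _ => rfl),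
        List.unattach_attach] at ih
      rw [dedupCols]
      simp only [List.length_cons]
      exact Nat.succ_le_succ (ih.trans (List.length_filter_le _ _))

lemma dedupCols_mem (a : Cell n m) : ∀ (l : List (Cell n m)),
    a ∈ l → (∀ c ∈ l, c.2 = a.2 → c = a) → a ∈ dedupCols l := by
  intro l
  induction l using dedupCols.induct with
  | case1 => intro h; exact absurd h List.not_mem_nil
  | case2 a0 l ih =>
      rw [List.unattach_filter (g := fun c => decide (c.2 ≠ a0.2)) (hf := fun _ _ => rfl),
        List.unattach_attach] at ih
      intro hmem huniq
      rw [dedupCols]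
      by_cases hcol : a0 = a
      · subst hcol; exact List.mem_cons_self
      · have ha2 : a.2 ≠ a0.2 := by
          intro hh
          exact hcol (huniq a0 (List.mem_cons_self) hh.symm)
        have hal : a ∈ l := by
          rcases List.mem_cons.mp hmem with h | h
          · exact absurd h.symm hcol
          · exact h
        refine List.mem_cons_of_mem _ (ih ?_ ?_)
        · rw [List.mem_filter]
          exact ⟨hal, by simpa using ha2⟩
        · intro c hc h2
          exact huniq c (List.mem_cons_of_mem _ (List.mem_of_mem_filter hc)) h2

end S10
namespace S10

open Prog

variable {n m : ℕ}

/-! #### the trace of the algorithm -/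

def tr1 (n m : ℕ) (j : Fin m) (x : Cell n m → Sym n m) : Trace n m :=
  (colCells n m j).map fun c => (c, x c)

def tr2 (n m : ℕ) (j : Fin m) (x : Cell n m → Sym n m) : Trace n m :=
  (extract1 j (tr1 n m j x)).map fun c => (c, x c)

def rtv (n m : ℕ) (j : Fin m) (x : Cell n m → Sym n m) :
    Trace n m × Option (Cell n m) :=
  (tourP (filt2 (tr2 n m j x))).run x

def tr5 (n m : ℕ) (j : Fin m) (x : Cell n m → Sym n m) : Trace n m :=
  (exploreO (rtv n m j x).2).run x

def fullTr (n m : ℕ) (j : Fin m) (x : Cell n m → Sym n m) : Trace n m :=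
  tr1 n m j x ++ (tr2 n m j x ++ ((rtv n m j x).1 ++ tr5 n m j x))

lemma run_algoP (j : Fin m) (x : Cell n m → Sym n m) :
    (algoP n m j).run x = finalDec n m j (fullTr n m j x) := by
  rw [algoP]
  simp only [run_bind, run_readL, run_ret]
  rfl

lemma fullTr_honest (j : Fin m) (x : Cell n m → Sym n m) :
    ∀ pr ∈ fullTr n m j x, x pr.1 = pr.2 := by
  intro pr hpr
  unfold fullTr at hpr
  simp only [List.mem_append] at hpr
  rcases hpr with h | h | h | h
  · rcases List.mem_map.mp h with ⟨c, _, hc⟩; subst hc; rfl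
  · rcases List.mem_map.mp h with ⟨c, _, hc⟩; subst hc; rfl
  · exact tourP_honest x _ pr h
  · exact exploreO_honest x _ pr h

lemma finalDec_eq_true_iff (j : Fin m) (tr : Trace n m) :
    finalDec n m j tr = true ↔
      ∀ y : Cell n m → Sym n m, (∀ pr ∈ tr, y pr.1 = pr.2) → goodColumn n m y j := by
  unfold finalDec
  split_ifs with h
  · exact iff_of_true rfl h
  · exact iff_of_false (by simp) h

/-! #### main correctness -/

theorem algo_correct (j : Fin m) (x : Cell n m → Sym n m) :
    (algoP n m j).run x = true ↔ goodColumn n m x j := by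
  rw [run_algoP, finalDec_eq_true_iff]
  constructor
  · intro h
    exact h x (fullTr_honest j x)
  · intro hgood
    obtain ⟨b, a, hg, hjb, ℓj, hfolj, hbpj⟩ := hgood
    obtain ⟨hA, hB, hC, hD, hE⟩ := hg
    -- basic facts about the witness
    have hvalb : ∀ i : Fin n, (x (i, b)).val = true := (hA b).mpr rfl
    have hab : ((a.1, b) : Cell n m) = a := by rw [← hB]
    have hane : x a ≠ PSym.one n m (Cell n m) := by
      have := (hC a.1).mpr hab
      rwa [hab] at this
    have ha2j : a.2 ≠ j := by rw [hB]; exact fun h => hjb h.symm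
    obtain ⟨ℓ, hfℓ, hℓ2, hℓv⟩ := hD j hjb
    have hℓeq : ℓ = ℓj := by rw [hfolj] at hfℓ; exact (Option.some.inj hfℓ).symm
    have hjv : (x ℓj).val = false := hℓeq ▸ hℓv
    have hj2 : ℓj.2 = j := hℓeq ▸ hℓ2
    -- step 1: `a` is among the candidates extracted from column `j`
    have hmem1 : a ∈ extract1 j (tr1 n m j x) := by
      unfold extract1 tr1
      rw [List.mem_filterMap]
      refine ⟨(ℓj, x ℓj), ?_, ?_⟩
      · rw [List.mem_map]
        refine ⟨ℓj, ?_, rfl⟩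
        unfold colCells
        rw [List.mem_map]
        exact ⟨ℓj.1, List.mem_finRange _, by rw [← hj2]⟩
      · show ((x ℓj).bp.bind fun a' =>
            if (x ℓj).val = false ∧ a'.2 ≠ j then some a' else none) = some a
        rw [hbpj, Option.bind_some, if_pos ⟨hjv, ha2j⟩]
    -- step 2: `a` survives the filtering
    have hmemL2 : a ∈ ((tr2 n m j x).filter
        fun pr => decide (pr.2 ≠ PSym.one n m (Cell n m))).map Prod.fst := by
      rw [List.mem_map]
      refine ⟨(a, x a), ?_, rfl⟩
      rw [List.mem_filter]
      constructor
      · unfold tr2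
        rw [List.mem_map]
        exact ⟨a, hmem1, rfl⟩
      · simpa using hane
    have hL2col : ∀ c ∈ ((tr2 n m j x).filter
        fun pr => decide (pr.2 ≠ PSym.one n m (Cell n m))).map Prod.fst,
        c.2 = a.2 → c = a := by
      intro c hc h2
      rw [List.mem_map] at hc
      obtain ⟨pr, hpr, hpr1⟩ := hc
      rw [List.mem_filter] at hpr
      obtain ⟨hpr2, hpr3⟩ := hpr
      unfold tr2 at hpr2
      rw [List.mem_map] at hpr2
      obtain ⟨c0, _, hc0⟩ := hpr2
      subst hc0
      simp only at hpr1
      subst hpr1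
      simp only [decide_eq_true_eq] at hpr3
      have hcb : ((c0.1, b) : Cell n m) = c0 := by rw [← hB, ← h2]
      have := (hC c0.1).mp (by rw [hcb]; exact hpr3)
      rw [← hcb]; exact this
    have hmem2 : a ∈ filt2 (tr2 n m j x) := dedupCols_mem a _ hmemL2 hL2col
    have hpwf : (filt2 (tr2 n m j x)).Pairwise (fun u v => u.2 ≠ v.2) :=
      dedupCols_pairwise _
    -- step 3: `a` wins the tournament
    have hwin : (rtv n m j x).2 = some a := by
      unfold rtv
      have hne : filt2 (tr2 n m j x) ≠ [] := by
        intro h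
        rw [h] at hmem2
        exact List.not_mem_nil hmem2
      obtain ⟨a0, l, hl⟩ := List.exists_cons_of_ne_nil hne
      have hcorrect := tourAux_correct x a
        (fun c => duel_win_first x a c (by intro i; rw [hB]; exact hvalb i))
        (fun c hc => by
          obtain ⟨ℓ', hf', h2', hv'⟩ := hD c.2 (fun hh => hc (hh.trans hB.symm))
          exact duel_win_second x a c ℓ' hf' h2' hv')
        l a0 (by rw [← hl]; exact hpwf)
        (by
          rcases List.mem_cons.mp (hl ▸ hmem2) with h | h
          · exact Or.inl h.symm
          · exact Or.inr h)
      rw [hl]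
      simp only [tourP, run_bind, run_ret]
      rw [hcorrect]
    -- step 4: the gathered trace forces `goodColumn · j`
    intro y hy
    have hT5 : tr5 n m j x = (explore a).run x := by
      unfold tr5
      rw [hwin]
      rfl
    have hsub : ∀ pr ∈ (explore a).run x, pr ∈ fullTr n m j x := by
      intro pr hpr
      unfold fullTr
      simp only [List.mem_append]
      right; right; right
      rw [hT5]
      exact hpr
    have hexp : (explore a).run x =
        ((colCells n m a.2).map fun c => (c, x c)) ++ (allPaths a (List.finRange m)).run x := by
      simp [explore]
    have hyb : ∀ i : Fin n, y (i, b) = x (i, b) := by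
      intro i
      refine hy ((i, b), x (i, b)) (hsub _ ?_)
      rw [hexp, List.mem_append]
      left
      rw [List.mem_map]
      refine ⟨(i, b), ?_, rfl⟩
      unfold colCells
      rw [List.mem_map]
      exact ⟨i, List.mem_finRange _, by rw [hB]⟩
    have hfolly : ∀ β : Fin m,
        followPath y a (treePath m β.1) = followPath x a (treePath m β.1) := by
      intro β
      refine followP_agree x y a _ ?_
      intro pr hpr
      refine hy pr (hsub pr ?_)
      rw [hexp, List.mem_append]
      right
      exact (allPaths_spec x a (List.finRange m) β (List.mem_finRange β)).1 pr hpr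
    have hlandy : ∀ (β : Fin m) (e : Cell n m),
        followPath x a (treePath m β.1) = some e → y e = x e := by
      intro β e he
      refine hy (e, x e) (hsub _ ?_)
      rw [hexp, List.mem_append]
      right
      exact (allPaths_spec x a (List.finRange m) β (List.mem_finRange β)).2 e he
    -- assemble gCond for y
    refine ⟨b, a, ⟨?_, hB, ?_, ?_, ?_⟩, hjb, ℓj,
      by rw [hfolly j]; exact hfolj,
      by rw [hlandy j ℓj hfolj]; exact hbpj⟩
    · intro j'
      constructor
      · intro hall
        by_contra hne
        obtain ⟨ℓ', hf', h2', hv'⟩ := hD j' hne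
        have hye : y ℓ' = x ℓ' := hlandy j' ℓ' hf'
        have hcell : ((ℓ'.1, j') : Cell n m) = ℓ' := by rw [← h2']
        have := hall ℓ'.1
        rw [hcell, hye, hv'] at this
        simp at this
      · intro h
        subst h
        intro i
        rw [hyb i]
        exact hvalb i
    · intro i
      rw [hyb i]
      exact hC i
    · intro j' hne
      obtain ⟨ℓ', hf', h2', hv'⟩ := hD j' hne
      exact ⟨ℓ', by rw [hfolly j']; exact hf', h2',
        by rw [hlandy j' ℓ' hf']; exact hv'⟩
    · have hset : {j' : Fin m | j' ≠ b ∧ ∃ ℓ'' : Cell n m,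
          followPath y a (treePath m j'.1) = some ℓ'' ∧ (y ℓ'').bp = some a}
          = {j' : Fin m | j' ≠ b ∧ ∃ ℓ'' : Cell n m,
          followPath x a (treePath m j'.1) = some ℓ'' ∧ (x ℓ'').bp = some a} := by
        ext j'
        simp only [Set.mem_setOf_eq]
        constructor
        · rintro ⟨h1, ℓ'', hf'', hb''⟩
          rw [hfolly j'] at hf''
          exact ⟨h1, ℓ'', hf'', by rw [← hlandy j' ℓ'' hf'']; exact hb''⟩
        · rintro ⟨h1, ℓ'', hf'', hb''⟩
          exact ⟨h1, ℓ'', by rw [hfolly j']; exact hf'',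
            by rw [hlandy j' ℓ'' hf'']; exact hb''⟩
      rw [hset]
      exact hE

/-! #### cost bound -/

lemma algoP_qs_le (j : Fin m) (x : Cell n m → Sym n m) :
    ((algoP n m j).qs x).length ≤ (n + m) * (Nat.log 2 m + 5) := by
  rw [algoP]
  simp only [qs_bind, qs_ret, qs_readL, run_bind, run_readL, run_ret, List.append_nil,
    List.length_append]
  have hcol : (colCells n m j).length = n := by simp [colCells]
  have htr1 : ∀ (t : Trace n m), (extract1 j t).length ≤ t.length := by
    intro t
    exact List.length_filterMap_le _ _
  have he1 : (extract1 j ((colCells n m j).map fun c => (c, x c))).length ≤ n := by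
    calc (extract1 j ((colCells n m j).map fun c => (c, x c))).length
        ≤ ((colCells n m j).map fun c => (c, x c)).length := htr1 _
      _ = n := by rw [List.length_map, hcol]
  have hfl : ∀ (t : Trace n m), (filt2 t).length ≤ t.length := by
    intro t
    unfold filt2
    calc (dedupCols ((t.filter fun pr => decide (pr.2 ≠ PSym.one n m (Cell n m))).map
          Prod.fst)).length
        ≤ ((t.filter fun pr => decide (pr.2 ≠ PSym.one n m (Cell n m))).map
          Prod.fst).length := dedupCols_length_le _
      _ ≤ t.length := by rw [List.length_map]; exact List.length_filter_le _ _
  have htour := tourP_qs_le x (filt2 ((extract1 j ((colCells n m j).map fun c => (c, x c))).map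
    fun c => (c, x c)))
  have hflen : (filt2 ((extract1 j ((colCells n m j).map fun c => (c, x c))).map
      fun c => (c, x c))).length ≤ n := by
    calc _ ≤ ((extract1 j ((colCells n m j).map fun c => (c, x c))).map
          fun c => (c, x c)).length := hfl _
      _ ≤ n := by rw [List.length_map]; exact he1
  have hexp := exploreO_qs_le (n := n) (m := m) x
    ((tourP (filt2 ((extract1 j ((colCells n m j).map fun c => (c, x c))).map
      fun c => (c, x c)))).run x).2
  have htour2 : ((tourP (filt2 ((extract1 j ((colCells n m j).map fun c => (c, x c))).map
      fun c => (c, x c)))).qs x).length ≤ n * (Nat.log 2 m + 2) :=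
    htour.trans (Nat.mul_le_mul_right _ hflen)
  set K := Nat.log 2 m with hK
  nlinarith [htour2, hexp, he1, hcol]

end S10
/-- For every column `j` there is a deterministic decision tree of cost
`Õ(n + m)` which accepts an input `x` iff `g_{n,m}(x) = 1` and column `j` is good in `x`. -/
theorem statement10 :
    ∃ C d : ℝ, 0 < C ∧ 0 < d ∧ ∀ n m : ℕ, 2 ≤ n → 2 ≤ m → Even m → ∀ j : Fin m,
      ∃ T : DTree (Fin n × Fin m) (PSym n m (Fin n × Fin m)),
        (∀ x, (T.cost x : ℝ) ≤ C * ((n : ℝ) + m) * Real.logb 2 ((n : ℝ) + m) ^ d) ∧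
        ∀ x, T.eval x = true ↔ (gFun n m x = true ∧ goodColumn n m x j) := by
  refine ⟨8, 1, by norm_num, by norm_num, ?_⟩
  intro n m hn hm _ j
  refine ⟨(S10.algoP n m j).toTree, ?_, ?_⟩
  · intro x
    rw [S10.Prog.cost_toTree]
    have hc := S10.algoP_qs_le j x
    have hcast : (((S10.algoP n m j).qs x).length : ℝ) ≤
        ((n : ℝ) + m) * ((Nat.log 2 m : ℝ) + 5) := by
      calc (((S10.algoP n m j).qs x).length : ℝ)
          ≤ (((n + m) * (Nat.log 2 m + 5) : ℕ) : ℝ) := Nat.cast_le.mpr hc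
        _ = ((n : ℝ) + m) * ((Nat.log 2 m : ℝ) + 5) := by push_cast; ring
    have h4 : (4 : ℝ) ≤ (n : ℝ) + m := by
      have h1 : (2 : ℝ) ≤ (n : ℝ) := by exact_mod_cast hn
      have h2 : (2 : ℝ) ≤ (m : ℝ) := by exact_mod_cast hm
      linarith
    have hmpos : (0 : ℝ) < (m : ℝ) := by
      have h2 : (2 : ℝ) ≤ (m : ℝ) := by exact_mod_cast hm
      linarith
    have hb2 : (2 : ℝ) ≤ Real.logb 2 ((n : ℝ) + m) := by
      have hmono : Real.logb 2 4 ≤ Real.logb 2 ((n : ℝ) + m) :=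
        Real.logb_le_logb_of_le (by norm_num) (by norm_num) h4
      have h24 : Real.logb 2 (4 : ℝ) = 2 := by
        rw [show (4 : ℝ) = 2 ^ (2 : ℕ) by norm_num, Real.logb_pow]
        rw [Real.logb_self_eq_one (by norm_num : (1:ℝ) < 2)]
        norm_num
      linarith
    have hKle : ((Nat.log 2 m : ℕ) : ℝ) ≤ Real.logb 2 ((n : ℝ) + m) := by
      have h1 : ((Nat.log 2 m : ℕ) : ℝ) ≤ Real.logb 2 (m : ℝ) := by
        have := Real.natLog_le_logb m 2
        simpa using this
      have h2 : Real.logb 2 (m : ℝ) ≤ Real.logb 2 ((n : ℝ) + m) := by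
        refine Real.logb_le_logb_of_le (by norm_num) hmpos ?_
        have : (0 : ℝ) ≤ (n : ℝ) := Nat.cast_nonneg n
        linarith
      linarith
    rw [Real.rpow_one]
    have hnm : (0 : ℝ) ≤ (n : ℝ) + m := by linarith
    nlinarith [mul_le_mul_of_nonneg_left hKle hnm, mul_le_mul_of_nonneg_left hb2 hnm]
  · intro x
    rw [S10.Prog.eval_toTree, S10.algo_correct]
    constructor
    · intro h
      refine ⟨?_, h⟩
      obtain ⟨b, a, hg, _⟩ := h
      unfold gFun
      rw [if_pos ⟨b, a, hg⟩]
    · exact fun h => h.2
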